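/- For any complex z with z^6 ≠ 1, z ≠ 0, and ω = e^{πi/3}, the identity z(1+ωz^3)(1-ωz)/(1-z^6) = ((1-ω^2)/3)·( 1/(1-z^{-2}) + 1/(1+ωz^2) - 1/(1-z^{-1}) - 1/(1+ωz) ) holds. -/

import Mathlib

open Complex Real

theorem partial_fraction_z_identity
    (z : ℂ) (hz0 : z ≠ 0) (hz : z ^ 6 ≠ 1)
    (ω : ℂ) (hω : ω = Complex.exp (Real.pi * Complex.I / 3)) :
    z * (1 + ω * z ^ 3) * (1 - ω * z) / (1 - z ^ 6) =
      (1 - ω ^ 2) / 3 *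
        (1 / (1 - (z ^ 2)⁻¹) + 1 / (1 + ω * z ^ 2) - 1 / (1 - z⁻¹) - 1 / (1 + ω * z)) := by
  have h3 : ((Real.sqrt 3 : ℝ) : ℂ) ^ 2 = 3 := by
    rw [← Complex.ofReal_pow, Real.sq_sqrt] <;> norm_num
  have hω' : ω = 1/2 + (Real.sqrt 3 / 2 : ℝ) * Complex.I := by
    rw [hω]
    have h : (↑Real.pi * Complex.I / 3 : ℂ) = (↑(Real.pi/3) * Complex.I) := by
      push_cast; ring
    rw [h, Complex.exp_mul_I, ← Complex.ofReal_cos, ← Complex.ofReal_sin,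
      Real.cos_pi_div_three, Real.sin_pi_div_three]
    push_cast; ring
  have hω2 : ω ^ 2 = ω - 1 := by
    rw [hω']; push_cast
    linear_combination ((Real.sqrt 3:ℂ)^2/4) * Complex.I_sq - (1/4 : ℂ) * h3
  have hω3 : ω ^ 3 = -1 := by linear_combination (ω + 1) * hω2
  have h6 : 1 - z ^ 6 ≠ 0 := sub_ne_zero.mpr (Ne.symm hz)
  have hz1 : z - 1 ≠ 0 := by
    intro h
    exact hz (by rw [show z = 1 from by linear_combination h]; norm_num)
  have hz2 : z ^ 2 - 1 ≠ 0 := by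
    intro h
    exact hz (by linear_combination (z^4 + z^2 + 1) * h)
  have hω6 : ω ^ 6 = 1 := by linear_combination (ω ^ 3 - 1) * hω3
  have ha : 1 + ω * z ≠ 0 := by
    intro h
    have e : ω * z = -1 := by linear_combination h
    exact hz (by
      calc z ^ 6 = ω ^ 6 * z ^ 6 := by rw [hω6]; ring
        _ = (ω * z) ^ 6 := by ring
        _ = 1 := by rw [e]; ring)
  have hb : 1 + ω * z ^ 2 ≠ 0 := by
    intro h
    have e : ω * z ^ 2 = -1 := by linear_combination h
    exact hz (by
      calc z ^ 6 = -(ω^3) * z ^ 6 := by rw [hω3]; ring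
        _ = -((ω * z^2)^3) := by ring
        _ = 1 := by rw [e]; ring)
  have hden : (3:ℂ) * ((z ^ 2 - 1) * (1 + ω * z ^ 2) * (z - 1) * (1 + ω * z)) ≠ 0 :=
    mul_ne_zero (by norm_num)
      (mul_ne_zero (mul_ne_zero (mul_ne_zero hz2 hb) hz1) ha)
  have ha' : 1 + z * ω ≠ 0 := by rw [mul_comm]; exact ha
  have hb' : 1 + z ^ 2 * ω ≠ 0 := by rw [mul_comm]; exact hb
  field_simp
  linear_combination ((2:ℂ)*z + (-2)*z^2 + (-3)*z^3 + 3*z^4 + z^7 + (-1)*z^8 + ω*z +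
    (-1)*ω*z^2 + 2*ω*z^4 + (-5)*ω*z^5 + 5*ω*z^7 + (-2)*ω*z^8 + ω*z^10 + (-1)*ω*z^11 +
    ω^2*z^4 + (-1)*ω^2*z^5 + (-3)*ω^2*z^8 + 3*ω^2*z^9 + 2*ω^2*z^10 + (-2)*ω^2*z^11) * hω2
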